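/- The quantity a_i(k) = |∂A_i(k)| · depth(A_i(k)) / |A_i(k)| tends to 0 as i and k tend to infinity: for every real c > 0 there exists N such that for all integers i, k ≥ N with i, k > 1, |∂A_i(k)| · depth(A_i(k)) < c · |A_i(k)|. -/

import Mathlib

/-- The (outer vertex) boundary of a set `A` in a simple graph. -/
def SimpleGraph.boundarySet {V : Type*} (G : SimpleGraph V) (A : Set V) : Set V :=
  {u | u ∉ A ∧ ∃ v ∈ A, G.Adj u v}

/-- The graph distance from a vertex to a set of vertices. -/
noncomputable def SimpleGraph.distToSet {V : Type*} (G : SimpleGraph V) (u : V) (A : Set V) : ℕ :=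
  sInf ((fun v => G.dist u v) '' A)

/-- The depth of a set: the supremum over `u ∈ A` of the distance from `u` to the complement. -/
noncomputable def SimpleGraph.depthSet {V : Type*} (G : SimpleGraph V) (A : Set V) : ℕ :=
  sSup ((fun u => G.distToSet u Aᶜ) '' A)

/-- The Cayley graph of the lattice ℤ² with its standard generating set:
`u` and `v` are adjacent iff they differ by `1` in exactly one coordinate. -/
def zsqGraph : SimpleGraph (ℤ × ℤ) where
  Adj u v := |u.1 - v.1| + |u.2 - v.2| = 1
  symm := by
    constructor
    intro u v h
    rw [abs_sub_comm v.1, abs_sub_comm v.2]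
    exact h
  loopless := by constructor; intro u h; simp at h

/-- The Cayley graph of a group `G` with respect to a generating set `S`. -/
def cayleyGraph {G : Type*} [Group G] (S : Set G) : SimpleGraph G where
  Adj x y := x ≠ y ∧ x⁻¹ * y ∈ S ∪ S⁻¹
  symm := by
    constructor
    rintro x y ⟨hxy, hmem⟩
    refine ⟨hxy.symm, ?_⟩
    have h : y⁻¹ * x = (x⁻¹ * y)⁻¹ := by group
    rw [h]
    rcases hmem with h' | h'
    · exact Or.inr (Set.inv_mem_inv.mpr h')
    · exact Or.inl (by simpa using h')
  loopless := ⟨fun x h => h.1 rfl⟩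

/-- `ballCard S n` is the number of vertices in the ball of radius `n`
(centered at the identity) in the Cayley graph of `G` with respect to `S`. -/
noncomputable def ballCard {G : Type*} [Group G] (S : Set G) (n : ℕ) : ℕ :=
  {x : G | (cayleyGraph S).dist 1 x ≤ n}.ncard

/-- The square grid `X_i(k) = {(m,n) : 0 ≤ m ≤ ki, 0 ≤ n ≤ ki}`. -/
def Xik (i k : ℤ) : Set (ℤ × ℤ) :=
  {p | 0 ≤ p.1 ∧ p.1 ≤ k * i ∧ 0 ≤ p.2 ∧ p.2 ≤ k * i}

/-- The lattice of removed points `Y_i(k) = {(mi, ni) : 1 ≤ m ≤ k-1, 1 ≤ n ≤ k-1}`. -/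
def Yik (i k : ℤ) : Set (ℤ × ℤ) :=
  {p | ∃ m n : ℤ, 1 ≤ m ∧ m ≤ k - 1 ∧ 1 ≤ n ∧ n ≤ k - 1 ∧ p = (m * i, n * i)}

/-- The set `A_i(k) = X_i(k) \ Y_i(k)`. -/
def Aik (i k : ℤ) : Set (ℤ × ℤ) := Xik i k \ Yik i k


/-! ### Auxiliary lemmas -/

lemma zsq_adj' {u v : ℤ × ℤ} (h : |u.1 - v.1| + |u.2 - v.2| = 1) : zsqGraph.Adj u v := h

lemma zsq_walk_exists : ∀ (n : ℕ) (u v : ℤ × ℤ),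
    (u.1 - v.1).natAbs + (u.2 - v.2).natAbs ≤ n →
    ∃ p : zsqGraph.Walk u v, p.length ≤ n := by
  intro n
  induction n with
  | zero =>
    intro u v h
    have : u = v := by
      have h1 : u.1 = v.1 := by omega
      have h2 : u.2 = v.2 := by omega
      exact Prod.ext h1 h2
    subst this
    exact ⟨SimpleGraph.Walk.nil, le_refl _⟩
  | succ n ih =>
    intro u v h
    by_cases huv : u = v
    · subst huv; exact ⟨SimpleGraph.Walk.nil, by simp⟩
    · have hne : u.1 ≠ v.1 ∨ u.2 ≠ v.2 := by
        by_contra hc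
        push_neg at hc
        exact huv (Prod.ext hc.1 hc.2)
      have hstep : ∃ u' : ℤ × ℤ, zsqGraph.Adj u u' ∧
          (u'.1 - v.1).natAbs + (u'.2 - v.2).natAbs ≤ n := by
        rcases hne with h1 | h2
        · rcases lt_or_gt_of_ne h1 with hlt | hgt
          · exact ⟨(u.1 + 1, u.2), zsq_adj' (by simp), by simp; omega⟩
          · exact ⟨(u.1 - 1, u.2), zsq_adj' (by simp), by simp; omega⟩
        · rcases lt_or_gt_of_ne h2 with hlt | hgt
          · exact ⟨(u.1, u.2 + 1), zsq_adj' (by simp), by simp; omega⟩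
          · exact ⟨(u.1, u.2 - 1), zsq_adj' (by simp), by simp; omega⟩
      obtain ⟨u', hadj, hd⟩ := hstep
      obtain ⟨p, hp⟩ := ih u' v hd
      exact ⟨SimpleGraph.Walk.cons hadj p, by simp; omega⟩

lemma zsq_dist_le_l1 (u v : ℤ × ℤ) :
    zsqGraph.dist u v ≤ (u.1 - v.1).natAbs + (u.2 - v.2).natAbs := by
  obtain ⟨p, hp⟩ := zsq_walk_exists _ u v le_rfl
  exact (SimpleGraph.dist_le p).trans hp

lemma near_mult (i k x : ℤ) (hi : 1 < i) (hx0 : 0 ≤ x) (hx1 : x ≤ k * i) :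
    ∃ m : ℤ, 0 ≤ m ∧ m ≤ k ∧ 2 * (x - m * i) ≤ i ∧ 2 * (m * i - x) ≤ i := by
  have hipos : (0:ℤ) < i := by omega
  have hqr : i * (x / i) + x % i = x := Int.mul_ediv_add_emod x i
  have hr0 : 0 ≤ x % i := Int.emod_nonneg x (by omega)
  have hr1 : x % i < i := Int.emod_lt_of_pos x hipos
  have hq0 : 0 ≤ x / i := Int.ediv_nonneg hx0 (le_of_lt hipos)
  have hqk : x / i ≤ k := by
    have := Int.ediv_le_ediv hipos hx1
    rwa [Int.mul_ediv_cancel _ (by omega)] at this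
  by_cases h : 2 * (x % i) ≤ i
  · refine ⟨x / i, hq0, hqk, ?_, ?_⟩ <;> nlinarith [hqr]
  · refine ⟨x / i + 1, by omega, ?_, ?_, ?_⟩
    · rcases eq_or_lt_of_le hqk with he | hl
      · exfalso
        have : i * (x / i) = i * k := by rw [he]
        nlinarith [hqr]
      · omega
    · nlinarith [hqr]
    · nlinarith [hqr]

lemma key_near (i k : ℤ) (hi : 1 < i) (hk : 1 < k) :
    ∀ u ∈ Aik i k, ∃ w ∉ Aik i k,
      (u.1 - w.1).natAbs + (u.2 - w.2).natAbs ≤ i.toNat := by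
  rintro ⟨x, y⟩ ⟨⟨hx0, hx1, hy0, hy1⟩, -⟩
  obtain ⟨m, hm0, hmk, hm1, hm2⟩ := near_mult i k x hi hx0 hx1
  obtain ⟨n, hn0, hnk, hn1, hn2⟩ := near_mult i k y hi hy0 hy1
  by_cases hm : 1 ≤ m ∧ m ≤ k - 1
  · by_cases hn : 1 ≤ n ∧ n ≤ k - 1
    · refine ⟨(m * i, n * i), ?_, by simp; omega⟩
      intro hA
      exact hA.2 ⟨m, n, hm.1, hm.2, hn.1, hn.2, rfl⟩
    · rcases (by omega : n = 0 ∨ n = k) with h | h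
      · have hni : n * i = 0 := by rw [h]; ring
        refine ⟨(x, -1), ?_, by simp; omega⟩
        intro hA
        have := hA.1.2.2.1
        omega
      · have hni : n * i = k * i := by rw [h]
        refine ⟨(x, k * i + 1), ?_, by simp; omega⟩
        intro hA
        have := hA.1.2.2.2
        omega
  · rcases (by omega : m = 0 ∨ m = k) with h | h
    · have hmi : m * i = 0 := by rw [h]; ring
      refine ⟨(-1, y), ?_, by simp; omega⟩
      intro hA
      have := hA.1.1
      omega
    · have hmi : m * i = k * i := by rw [h]
      refine ⟨(k * i + 1, y), ?_, by simp; omega⟩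
      intro hA
      have := hA.1.2.1
      omega

lemma depth_le (i k : ℤ) (hi : 1 < i) (hk : 1 < k) :
    zsqGraph.depthSet (Aik i k) ≤ i.toNat := by
  apply csSup_le'
  rintro _ ⟨u, hu, rfl⟩
  obtain ⟨w, hw, hd⟩ := key_near i k hi hk u hu
  have h1 : zsqGraph.distToSet u (Aik i k)ᶜ ≤ zsqGraph.dist u w :=
    Nat.sInf_le ⟨w, hw, rfl⟩
  exact h1.trans ((zsq_dist_le_l1 u w).trans hd)

lemma sq_set_eq (a b : ℤ) :
    (Set.Icc a b ×ˢ Set.Icc a b : Set (ℤ × ℤ)) = ↑(Finset.Icc a b ×ˢ Finset.Icc a b) := by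
  rw [Finset.coe_product, Finset.coe_Icc]

lemma sq_ncard (a b : ℤ) :
    (Set.Icc a b ×ˢ Set.Icc a b : Set (ℤ × ℤ)).ncard = (b + 1 - a).toNat * (b + 1 - a).toNat := by
  rw [sq_set_eq, Set.ncard_coe_finset, Finset.card_product, Int.card_Icc]

lemma sq_fin (a b : ℤ) : (Set.Icc a b ×ˢ Set.Icc a b : Set (ℤ × ℤ)).Finite := by
  rw [sq_set_eq]; exact (Finset.Icc a b ×ˢ Finset.Icc a b).finite_toSet

lemma Xik_eq (i k : ℤ) : Xik i k = Set.Icc 0 (k * i) ×ˢ Set.Icc 0 (k * i) := by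
  ext ⟨a, b⟩
  simp only [Xik, Set.mem_setOf_eq, Set.mem_prod, Set.mem_Icc]
  tauto

lemma Yik_eq (i k : ℤ) :
    Yik i k = (fun p : ℤ × ℤ => (p.1 * i, p.2 * i)) ''
      (Set.Icc 1 (k - 1) ×ˢ Set.Icc 1 (k - 1)) := by
  ext p
  constructor
  · rintro ⟨m, n, h1, h2, h3, h4, rfl⟩
    exact ⟨(m, n), ⟨Set.mem_Icc.2 ⟨h1, h2⟩, Set.mem_Icc.2 ⟨h3, h4⟩⟩, rfl⟩
  · rintro ⟨⟨m, n⟩, ⟨hm, hn⟩, rfl⟩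
    rw [Set.mem_Icc] at hm hn
    exact ⟨m, n, hm.1, hm.2, hn.1, hn.2, rfl⟩

lemma Yik_fin (i k : ℤ) : (Yik i k).Finite := by
  rw [Yik_eq]; exact (sq_fin 1 (k - 1)).image _

lemma Yik_ncard_le (i k : ℤ) : (Yik i k).ncard ≤ (k - 1).toNat * (k - 1).toNat := by
  rw [Yik_eq]
  calc _ ≤ (Set.Icc 1 (k-1) ×ˢ Set.Icc 1 (k-1) : Set (ℤ × ℤ)).ncard :=
        Set.ncard_image_le (sq_fin 1 (k-1))
    _ = _ := by rw [sq_ncard]; norm_num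

lemma Yik_sub_Xik (i k : ℤ) (hi : 1 < i) : Yik i k ⊆ Xik i k := by
  rintro p ⟨m, n, h1, h2, h3, h4, rfl⟩
  refine ⟨by positivity, ?_, by positivity, ?_⟩ <;>
    · simp only
      nlinarith

lemma boundary_sub (i k : ℤ) :
    zsqGraph.boundarySet (Aik i k) ⊆
      ((Set.Icc (-1) (k*i+1) ×ˢ Set.Icc (-1) (k*i+1) : Set (ℤ × ℤ)) \ Xik i k) ∪ Yik i k := by
  rintro u ⟨hu, v, hv, hadj⟩
  by_cases hY : u ∈ Yik i k
  · exact Or.inr hY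
  · left
    have hX : u ∉ Xik i k := fun hXm => hu ⟨hXm, hY⟩
    refine ⟨?_, hX⟩
    obtain ⟨h1, h2, h3, h4⟩ := hv.1
    have hadj' : (u.1 - v.1).natAbs + (u.2 - v.2).natAbs = 1 := by
      have h5 : ((u.1 - v.1).natAbs : ℤ) + (u.2 - v.2).natAbs = 1 := by
        rw [← Int.abs_eq_natAbs, ← Int.abs_eq_natAbs]; exact hadj
      exact_mod_cast h5
    exact ⟨Set.mem_Icc.2 ⟨by omega, by omega⟩, Set.mem_Icc.2 ⟨by omega, by omega⟩⟩


lemma numer_est (c K I : ℝ) (hc : 0 < c) (hK2 : 2 ≤ K) (hI2 : 2 ≤ I)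
    (hcK : 27 ≤ c * K) (hcI : 27 ≤ c * I) :
    ((K * I + 3) * (K * I + 3) - (K * I + 1) * (K * I + 1) + (K - 1) * (K - 1)) * I
      < c * ((K * I + 1) * (K * I + 1) - (K - 1) * (K - 1)) := by
  have hK0 : (0 : ℝ) < K := by linarith
  have hI0 : (0 : ℝ) < I := by linarith
  have e1 : 27 * (6 * K * I ^ 2) ≤ (c * K) * (6 * K * I ^ 2) :=
    mul_le_mul_of_nonneg_right hcK (by positivity)
  have e2 : 27 * (K ^ 2 * I) ≤ (c * I) * (K ^ 2 * I) :=
    mul_le_mul_of_nonneg_right hcI (by positivity)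
  have hI4 : (4 : ℝ) ≤ I ^ 2 := by nlinarith
  have e3 : c * K ^ 2 * 4 ≤ c * K ^ 2 * I ^ 2 :=
    mul_le_mul_of_nonneg_left hI4 (by positivity)
  have e4 : 8 * I ≤ 2 * K * I ^ 2 := by nlinarith
  have e5 : (K - 1) ^ 2 * I ≤ K ^ 2 * I := by nlinarith
  have e6 : c * (K - 1) ^ 2 ≤ c * K ^ 2 := by nlinarith
  have e7 : 0 ≤ c * K * I := by positivity
  have hpos : 0 < c * K ^ 2 * I ^ 2 := by positivity
  linarith [e1, e2, e3, e4, e5, e6, e7, hpos, hc]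

lemma bB_nonneg (K I : ℝ) (hK2 : 2 ≤ K) (hI2 : 2 ≤ I) :
    (0 : ℝ) ≤ (K * I + 3) * (K * I + 3) - (K * I + 1) * (K * I + 1) + (K - 1) * (K - 1) := by
  nlinarith

/-- `a_i(k) = |∂A_i(k)| ⬝ depth(A_i(k)) / |A_i(k)| → 0` as `i, k → ∞`: for every real
`c > 0` there is `N` so that for all integers `i, k ≥ N` with `i, k > 1` we have
`|∂A_i(k)| ⬝ depth(A_i(k)) < c ⬝ |A_i(k)|`. -/
theorem stmt_6 (c : ℝ) (hc : 0 < c) :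
    ∃ N : ℕ, ∀ i k : ℤ, 1 < i → 1 < k → (N : ℤ) ≤ i → (N : ℤ) ≤ k →
      (((zsqGraph.boundarySet (Aik i k)).ncard : ℝ) * (zsqGraph.depthSet (Aik i k) : ℝ))
        < c * ((Aik i k).ncard : ℝ) := by
  refine ⟨max 2 ⌈(27 : ℝ) / c⌉₊, ?_⟩
  intro i k hi hk hNi hNk
  set N : ℕ := max 2 ⌈(27 : ℝ) / c⌉₊ with hN
  -- basic cast facts
  set K : ℝ := (k : ℝ) with hKdef
  set I : ℝ := (i : ℝ) with hIdef
  have hK2 : (2 : ℝ) ≤ K := by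
    rw [hKdef]
    have h2 : (2 : ℤ) ≤ k := by omega
    exact_mod_cast h2
  have hI2 : (2 : ℝ) ≤ I := by
    rw [hIdef]
    have h2 : (2 : ℤ) ≤ i := by omega
    exact_mod_cast h2
  have hNceil : ((⌈(27 : ℝ) / c⌉₊ : ℝ)) ≥ 27 / c := Nat.le_ceil _
  have hNK : (N : ℝ) ≤ K := by
    have : ((N : ℤ) : ℝ) ≤ (k : ℝ) := by exact_mod_cast hNk
    simpa using this
  have hNI : (N : ℝ) ≤ I := by
    have : ((N : ℤ) : ℝ) ≤ (i : ℝ) := by exact_mod_cast hNi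
    simpa using this
  have hceilN : ((⌈(27 : ℝ) / c⌉₊ : ℝ)) ≤ (N : ℝ) := by
    exact_mod_cast Nat.cast_le.2 (le_max_right 2 _)
  have hcK : 27 ≤ c * K := by
    have h27 : 27 / c ≤ K := le_trans (le_trans hNceil hceilN) hNK
    rw [div_le_iff₀ hc] at h27
    linarith [h27]
  have hcI : 27 ≤ c * I := by
    have h27 : 27 / c ≤ I := le_trans (le_trans hNceil hceilN) hNI
    rw [div_le_iff₀ hc] at h27
    linarith [h27]
  -- cast helper
  have cast_toNat : ∀ a : ℤ, 0 ≤ a → ((a.toNat : ℝ)) = (a : ℝ) := fun a ha => by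
    exact_mod_cast Int.toNat_of_nonneg ha
  have hki0 : (0 : ℤ) ≤ k * i := mul_nonneg (by omega) (by omega)
  -- cardinality of X
  have hXfin : (Xik i k).Finite := by rw [Xik_eq]; exact sq_fin _ _
  have hXcard : ((Xik i k).ncard : ℝ) = (K * I + 1) * (K * I + 1) := by
    rw [Xik_eq, sq_ncard]
    push_cast
    rw [cast_toNat _ (by omega)]
    push_cast
    ring
  -- cardinality of Y
  have hYle : ((Yik i k).ncard : ℝ) ≤ (K - 1) * (K - 1) := by
    calc ((Yik i k).ncard : ℝ) ≤ ((k - 1).toNat * (k - 1).toNat : ℕ) := by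
          exact_mod_cast Yik_ncard_le i k
      _ = (K - 1) * (K - 1) := by
          push_cast
          rw [cast_toNat _ (by omega)]
          push_cast
          ring
  -- lower bound on |A|
  have hYX := Yik_sub_Xik i k hi
  have hAcard : ((Aik i k).ncard : ℝ) = ((Xik i k).ncard : ℝ) - ((Yik i k).ncard : ℝ) := by
    have h1 : (Aik i k).ncard = (Xik i k).ncard - (Yik i k).ncard :=
      Set.ncard_diff hYX (Yik_fin i k)
    have h2 : (Yik i k).ncard ≤ (Xik i k).ncard := Set.ncard_le_ncard hYX hXfin
    rw [h1, Nat.cast_sub h2]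
  have hAlow : (K * I + 1) * (K * I + 1) - (K - 1) * (K - 1) ≤ ((Aik i k).ncard : ℝ) := by
    rw [hAcard, hXcard]
    linarith [hYle]
  -- upper bound on |∂A|
  have hFsub : Xik i k ⊆ (Set.Icc (-1) (k*i+1) ×ˢ Set.Icc (-1) (k*i+1) : Set (ℤ × ℤ)) := by
    rw [Xik_eq]
    exact Set.prod_mono (Set.Icc_subset_Icc (by omega) (by omega))
      (Set.Icc_subset_Icc (by omega) (by omega))
  have hFcard : (((Set.Icc (-1) (k*i+1) ×ˢ Set.Icc (-1) (k*i+1) : Set (ℤ × ℤ)) \ Xik i k).ncard : ℝ)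
      = (K * I + 3) * (K * I + 3) - (K * I + 1) * (K * I + 1) := by
    have h1 := Set.ncard_diff hFsub hXfin
    have h2 : (Xik i k).ncard ≤ (Set.Icc (-1) (k*i+1) ×ˢ Set.Icc (-1) (k*i+1) : Set (ℤ × ℤ)).ncard :=
      Set.ncard_le_ncard hFsub (sq_fin _ _)
    rw [h1, Nat.cast_sub h2, hXcard, sq_ncard]
    have h3 : (k * i + 1 + 1 - -1) = k * i + 3 := by ring
    rw [h3]
    push_cast
    rw [cast_toNat _ (by omega)]
    push_cast
    ring
  have hBfin : ((Set.Icc (-1) (k*i+1) ×ˢ Set.Icc (-1) (k*i+1) : Set (ℤ × ℤ)) \ Xik i k ∪ Yik i k).Finite :=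
    ((sq_fin _ _).subset Set.diff_subset).union (Yik_fin i k)
  have hBle : (((zsqGraph.boundarySet (Aik i k)).ncard : ℝ))
      ≤ (K * I + 3) * (K * I + 3) - (K * I + 1) * (K * I + 1) + (K - 1) * (K - 1) := by
    have h1 : (zsqGraph.boundarySet (Aik i k)).ncard
        ≤ ((Set.Icc (-1) (k*i+1) ×ˢ Set.Icc (-1) (k*i+1) : Set (ℤ × ℤ)) \ Xik i k).ncard
          + (Yik i k).ncard :=
      (Set.ncard_le_ncard (boundary_sub i k) hBfin).trans (Set.ncard_union_le _ _)
    calc (((zsqGraph.boundarySet (Aik i k)).ncard : ℝ))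
        ≤ (((Set.Icc (-1) (k*i+1) ×ˢ Set.Icc (-1) (k*i+1) : Set (ℤ × ℤ)) \ Xik i k).ncard : ℝ)
          + ((Yik i k).ncard : ℝ) := by exact_mod_cast h1
      _ ≤ _ := by rw [hFcard]; linarith [hYle]
  -- depth bound
  have hD : ((zsqGraph.depthSet (Aik i k) : ℕ) : ℝ) ≤ I := by
    calc ((zsqGraph.depthSet (Aik i k) : ℕ) : ℝ) ≤ ((i.toNat : ℕ) : ℝ) := by
          exact_mod_cast depth_le i k hi hk
      _ = I := cast_toNat _ (by omega)
  -- the numeric estimate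
  have hB0 : (0 : ℝ) ≤ ((zsqGraph.boundarySet (Aik i k)).ncard : ℝ) := Nat.cast_nonneg _
  have hD0 : (0 : ℝ) ≤ ((zsqGraph.depthSet (Aik i k) : ℕ) : ℝ) := Nat.cast_nonneg _
  have hbB0 : (0 : ℝ) ≤ (K * I + 3) * (K * I + 3) - (K * I + 1) * (K * I + 1) + (K - 1) * (K - 1) :=
    bB_nonneg K I hK2 hI2
  have hmul : ((zsqGraph.boundarySet (Aik i k)).ncard : ℝ) * ((zsqGraph.depthSet (Aik i k) : ℕ) : ℝ)
      ≤ ((K * I + 3) * (K * I + 3) - (K * I + 1) * (K * I + 1) + (K - 1) * (K - 1)) * I :=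
    mul_le_mul hBle hD hD0 hbB0
  have hmid : ((K * I + 3) * (K * I + 3) - (K * I + 1) * (K * I + 1) + (K - 1) * (K - 1)) * I
      < c * ((K * I + 1) * (K * I + 1) - (K - 1) * (K - 1)) :=
    numer_est c K I hc hK2 hI2 hcK hcI
  have hRle : c * ((K * I + 1) * (K * I + 1) - (K - 1) * (K - 1)) ≤ c * ((Aik i k).ncard : ℝ) :=
    mul_le_mul_of_nonneg_left hAlow hc.le
  calc ((zsqGraph.boundarySet (Aik i k)).ncard : ℝ) * ((zsqGraph.depthSet (Aik i k) : ℕ) : ℝ)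
      ≤ ((K * I + 3) * (K * I + 3) - (K * I + 1) * (K * I + 1) + (K - 1) * (K - 1)) * I := hmul
    _ < c * ((K * I + 1) * (K * I + 1) - (K - 1) * (K - 1)) := hmid
    _ ≤ c * ((Aik i k).ncard : ℝ) := hRle
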